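/- Invariance under choice of g-inverse: Let A₁^g and A₂^g be two g-inverses of A and suppose A·q = c is consistent. If there exists p₁ with (I − A₁^g A)·p₁ ≤ A₁^g c, then there exists p₂ with (I − A₂^g A)·p₂ ≤ A₂^g c. -/

import Mathlib

open Matrix

/-- Invariance under the choice of g-inverse: if `(I − A₁g·A)·p₁ ≤ A₁g·c`
has a solution, then `(I − A₂g·A)·p₂ ≤ A₂g·c` has a solution. -/
theorem stmt10 (m n : ℕ) (A : Matrix (Fin m) (Fin n) ℝ)
    (A1g A2g : Matrix (Fin n) (Fin m) ℝ) (c : Fin m → ℝ)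
    (hg1 : A * A1g * A = A) (hg2 : A * A2g * A = A)
    (hcons : ∃ q : Fin n → ℝ, A *ᵥ q = c)
    (h1 : ∃ p1 : Fin n → ℝ, (1 - A1g * A) *ᵥ p1 ≤ A1g *ᵥ c) :
    ∃ p2 : Fin n → ℝ, (1 - A2g * A) *ᵥ p2 ≤ A2g *ᵥ c := by
  obtain ⟨q, hq⟩ := hcons
  obtain ⟨p1, hp1⟩ := h1
  set u : Fin n → ℝ := (1 - A1g * A) *ᵥ p1 with hu
  set d : Fin n → ℝ := A2g *ᵥ c - A1g *ᵥ c with hd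
  have hAu : A *ᵥ u = 0 := by
    rw [hu, mulVec_mulVec, Matrix.mul_sub, Matrix.mul_one, ← Matrix.mul_assoc, hg1,
      sub_self, zero_mulVec]
  have hAd : A *ᵥ d = 0 := by
    rw [hd, mulVec_sub, ← hq]
    simp [mulVec_mulVec, ← Matrix.mul_assoc, hg1, hg2]
  refine ⟨u + d, ?_⟩
  have hfix : (1 - A2g * A) *ᵥ (u + d) = u + d := by
    rw [sub_mulVec, one_mulVec, ← mulVec_mulVec, mulVec_add, hAu, hAd, add_zero,
      mulVec_zero, sub_zero]
  rw [hfix]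
  have : A1g *ᵥ c + d = A2g *ᵥ c := by rw [hd]; abel
  calc u + d ≤ A1g *ᵥ c + d := add_le_add_left hp1 d
    _ = A2g *ᵥ c := this
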